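/- Let E ∈ Mat_N(ℤ) be invertible over ℚ with E_{ij} ≥ 0, W(x) = ∑_i ∏_j x_j^{E_{ij}}, and let g = diag(e^{2πi g₁},…,e^{2πi g_N}) with g_j ∈ ℚ. Then W(g·x) = W(x) for all x ∈ ℂ^N if and only if E·(g₁,…,g_N)^T ∈ ℤ^N. -/
import Mathlib


/-- Characterization of the maximal diagonal symmetry group of an invertible polynomial:
`g = diag(e^{2πi g₁},…,e^{2πi g_N})` (with `gⱼ ∈ ℚ`) satisfies `W(g·x) = W(x)` for all `x`
if and only if `E·g ∈ ℤ^N`. -/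
theorem diagonal_symmetry_iff {N : ℕ} (E : Matrix (Fin N) (Fin N) ℤ)
    (hE : IsUnit (E.map (Int.cast : ℤ → ℚ)).det) (hpos : ∀ i j, 0 ≤ E i j)
    (g : Fin N → ℚ) :
    (∀ x : Fin N → ℂ,
        (∑ i, ∏ j, (Complex.exp (2 * Real.pi * Complex.I * ((g j : ℚ) : ℂ)) * x j) ^
          (E i j).toNat) =
        ∑ i, ∏ j, (x j) ^ (E i j).toNat) ↔
      ∀ i, ∃ m : ℤ, (Matrix.mulVec (E.map (Int.cast : ℤ → ℚ)) g) i = (m : ℚ) := by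
  classical
  set q : Fin N → ℚ := fun i => ∑ j, (E i j : ℚ) * g j with hq
  have hmv : ∀ i, (Matrix.mulVec (E.map (Int.cast : ℤ → ℚ)) g) i = q i := by
    intro i
    simp [Matrix.mulVec, dotProduct, hq, Matrix.map_apply]
  set c : Fin N → ℂ := fun i => Complex.exp (2 * Real.pi * Complex.I * ((q i : ℚ) : ℂ)) with hc
  -- Key computation
  have keyA : ∀ (i : Fin N) (x : Fin N → ℂ),
      (∏ j, (Complex.exp (2 * Real.pi * Complex.I * ((g j : ℚ) : ℂ)) * x j) ^ (E i j).toNat)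
        = c i * ∏ j, (x j) ^ (E i j).toNat := by
    intro i x
    have step : ∀ j : Fin N,
        (Complex.exp (2 * Real.pi * Complex.I * ((g j : ℚ) : ℂ)) * x j) ^ (E i j).toNat
        = Complex.exp (2 * Real.pi * Complex.I * (((E i j : ℚ) * g j : ℚ) : ℂ))
            * (x j) ^ (E i j).toNat := by
      intro j
      rw [mul_pow, ← Complex.exp_nat_mul]
      congr 2
      have : ((E i j).toNat : ℂ) = ((E i j : ℚ) : ℂ) := by
        exact_mod_cast congrArg (Int.cast : ℤ → ℂ) (Int.toNat_of_nonneg (hpos i j))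
      rw [this]
      push_cast
      ring
    rw [Finset.prod_congr rfl (fun j _ => step j), Finset.prod_mul_distrib,
      ← Complex.exp_sum]
    congr 2
    show (∑ j, 2 * (Real.pi : ℂ) * Complex.I * (((E i j : ℚ) * g j : ℚ) : ℂ))
      = 2 * (Real.pi : ℂ) * Complex.I * (((∑ j, (E i j : ℚ) * g j : ℚ) : ℚ) : ℂ)
    push_cast
    rw [Finset.mul_sum]
  have hcone : ∀ i, (c i = 1 ↔ ∃ m : ℤ, q i = (m : ℚ)) := by
    intro i
    have hrfl : c i = Complex.exp (2 * (Real.pi : ℂ) * Complex.I * ((q i : ℚ) : ℂ)) := rfl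
    rw [hrfl, Complex.exp_eq_one_iff]
    constructor
    · rintro ⟨n, hn⟩
      refine ⟨n, ?_⟩
      have h2 : (2 * (Real.pi : ℂ) * Complex.I) ≠ 0 := Complex.two_pi_I_ne_zero
      have : ((q i : ℚ) : ℂ) = (n : ℂ) := by
        rw [mul_comm ((n : ℂ)) _] at hn
        exact mul_left_cancel₀ h2 hn
      exact_mod_cast this
    · rintro ⟨m, hm⟩
      exact ⟨m, by rw [hm]; push_cast; ring⟩
  -- row injectivity
  have hdinj : ∀ i i' : Fin N,
      (fun j => (E i j).toNat) = (fun j => (E i' j).toNat) → i = i' := by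
    intro i i' h
    by_contra hne
    have hrow : (E.map (Int.cast : ℤ → ℚ)) i = (E.map (Int.cast : ℤ → ℚ)) i' := by
      funext j
      have := congrFun h j
      have hEj : E i j = E i' j := by
        rw [← Int.toNat_of_nonneg (hpos i j), ← Int.toNat_of_nonneg (hpos i' j), this]
      simp [Matrix.map_apply, hEj]
    have := Matrix.det_zero_of_row_eq hne hrow
    rw [this] at hE
    exact (by simp : ¬ IsUnit (0 : ℚ)) hE
  constructor
  · intro h i
    rw [hmv, ← hcone]
    -- polynomial argument
    set d : Fin N → (Fin N →₀ ℕ) :=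
      fun i => Finsupp.equivFunOnFinite.symm (fun j => (E i j).toNat) with hd
    have hdinj' : ∀ i i' : Fin N, d i = d i' → i = i' := by
      intro a b hab
      exact hdinj a b (by
        have := Finsupp.equivFunOnFinite.symm.injective hab
        exact this)
    set P : MvPolynomial (Fin N) ℂ := ∑ i, MvPolynomial.monomial (d i) (c i) with hP
    set Q : MvPolynomial (Fin N) ℂ := ∑ i, MvPolynomial.monomial (d i) (1 : ℂ) with hQ
    have heval : ∀ x : Fin N → ℂ, MvPolynomial.eval x P = MvPolynomial.eval x Q := by
      intro x
      have e1 : ∀ (a : ℂ) (i : Fin N),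
          MvPolynomial.eval x (MvPolynomial.monomial (d i) a)
            = a * ∏ j, (x j) ^ (E i j).toNat := by
        intro a i
        rw [MvPolynomial.eval_monomial]
        congr 1
        rw [Finsupp.prod_pow]
        exact Finset.prod_congr rfl (fun j _ => by
          simp [hd, Finsupp.equivFunOnFinite])
      rw [hP, hQ, map_sum, map_sum]
      simp only [e1, one_mul]
      rw [← Finset.sum_congr rfl (fun i _ => keyA i x)]
      exact h x
    have hPQ : P = Q := MvPolynomial.funext heval
    have hcoeff := congrArg (MvPolynomial.coeff (d i)) hPQ
    rw [hP, hQ, MvPolynomial.coeff_sum, MvPolynomial.coeff_sum] at hcoeff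
    simp only [MvPolynomial.coeff_monomial] at hcoeff
    have collapse : ∀ (a : Fin N → ℂ),
        (∑ i', if d i' = d i then a i' else 0) = a i := by
      intro a
      rw [Finset.sum_eq_single i]
      · simp
      · intro b _ hb
        rw [if_neg (fun hdb => hb (hdinj' b i hdb))]
      · intro hni; exact absurd (Finset.mem_univ i) hni
    rw [collapse c, collapse (fun _ => (1 : ℂ))] at hcoeff
    exact hcoeff
  · intro h x
    have hci : ∀ i, c i = 1 := by
      intro i
      rw [hcone i]
      obtain ⟨m, hm⟩ := h i
      exact ⟨m, by rw [← hmv]; exact hm⟩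
    calc (∑ i, ∏ j, (Complex.exp (2 * Real.pi * Complex.I * ((g j : ℚ) : ℂ)) * x j) ^
          (E i j).toNat)
        = ∑ i, c i * ∏ j, (x j) ^ (E i j).toNat :=
          Finset.sum_congr rfl (fun i _ => keyA i x)
      _ = ∑ i, ∏ j, (x j) ^ (E i j).toNat := by
          exact Finset.sum_congr rfl (fun i _ => by rw [hci i, one_mul])
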